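/- arXiv:1509.01754 — 2 statements merged into one kernel-verified Lean document; each statement's English description precedes it below -/
import Mathlib

section
/- Let R(t), R̄(t) ∈ SO(3) satisfy Ṙ = RΩ̂ and (d/dt)R̄ = R̄(Ω + γ̃ + k_R e)^ for some curves Ω, γ̃, e : ℝ → ℝ³ and constant k_R. Fix a unit vector u ∈ ℝ³ and set b = Rᵀu, b̄ = R̄ᵀu, Ψ_N = 1 - ⟨b̄, b⟩. Then dΨ_N/dt = ⟨γ̃ + k_R e, b̄ × b⟩. -/
open Matrix

noncomputable section

def hat (x : Fin 3 → ℝ) : Matrix (Fin 3) (Fin 3) ℝ :=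
  !![0, -x 2, x 1; x 2, 0, -x 0; -x 1, x 0, 0]

def vee (M : Matrix (Fin 3) (Fin 3) ℝ) : Fin 3 → ℝ :=
  ![M 2 1, M 0 2, M 1 0]

def SO3 (R : Matrix (Fin 3) (Fin 3) ℝ) : Prop :=
  Rᵀ * R = 1 ∧ R.det = 1

attribute [local instance] Matrix.linftyOpNormedAddCommGroup Matrix.linftyOpNormedSpace

def entryCLM (i j : Fin 3) : Matrix (Fin 3) (Fin 3) ℝ →L[ℝ] ℝ :=
  LinearMap.toContinuousLinearMap
    { toFun := fun M => M i j
      map_add' := fun _ _ => rfl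
      map_smul' := fun _ _ => rfl }

set_option maxHeartbeats 1000000 in
lemma hasDerivAt_entry {R : ℝ → Matrix (Fin 3) (Fin 3) ℝ} {M : Matrix (Fin 3) (Fin 3) ℝ}
    {t : ℝ} (h : HasDerivAt R M t) (i j : Fin 3) :
    HasDerivAt (fun s => R s i j) (M i j) t :=
  ((entryCLM i j).hasFDerivAt.comp_hasDerivAt t h)

set_option maxHeartbeats 2000000 in
theorem deriv_PsiN (R Rbar : ℝ → Matrix (Fin 3) (Fin 3) ℝ)
    (Ω γtil e : ℝ → Fin 3 → ℝ) (kR : ℝ) (u : Fin 3 → ℝ) (hu : u ⬝ᵥ u = 1)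
    (hRdyn : ∀ t, HasDerivAt R (R t * hat (Ω t)) t)
    (hRbardyn : ∀ t, HasDerivAt Rbar (Rbar t * hat (Ω t + γtil t + kR • e t)) t)
    (hR : ∀ t, SO3 (R t)) (hRbar : ∀ t, SO3 (Rbar t)) (t : ℝ) :
    HasDerivAt (fun s => 1 - ((Rbar s)ᵀ.mulVec u) ⬝ᵥ ((R s)ᵀ.mulVec u))
      ((γtil t + kR • e t) ⬝ᵥ
        crossProduct ((Rbar t)ᵀ.mulVec u) ((R t)ᵀ.mulVec u)) t := by
  set M : Matrix (Fin 3) (Fin 3) ℝ := R t * hat (Ω t) with hM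
  set Mb : Matrix (Fin 3) (Fin 3) ℝ := Rbar t * hat (Ω t + γtil t + kR • e t) with hMb
  have key : HasDerivAt
      (fun s => ∑ i, (∑ j, Rbar s j i * u j) * (∑ j, R s j i * u j))
      (∑ i, ((∑ j, Mb j i * u j) * (∑ j, R t j i * u j)
        + (∑ j, Rbar t j i * u j) * (∑ j, M j i * u j))) t := by
    refine HasDerivAt.fun_sum fun i _ => ?_
    exact (HasDerivAt.fun_sum fun j _ =>
        (hasDerivAt_entry (hRbardyn t) j i).mul_const (u j)).mul
      (HasDerivAt.fun_sum fun j _ => (hasDerivAt_entry (hRdyn t) j i).mul_const (u j))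
  have key2 := key.const_sub 1
  have hfun : (fun s => 1 - ((Rbar s)ᵀ.mulVec u) ⬝ᵥ ((R s)ᵀ.mulVec u))
      = fun s => 1 - ∑ i, (∑ j, Rbar s j i * u j) * (∑ j, R s j i * u j) := by
    funext s
    simp [Matrix.mulVec, dotProduct, Matrix.transpose_apply]
  rw [hfun]
  refine key2.congr_deriv ?_
  simp [hM, hMb, hat, Matrix.mul_apply, Matrix.mulVec, Matrix.transpose_apply,
    dotProduct, Fin.sum_univ_three, crossProduct]
  ring
end
end

section
/- Let K be a symmetric 3×3 matrix, R, R̄ ∈ SO(3) with Ṙ = RΩ̂ and (d/dt)R̄ = R̄(Ω + γ̃ + k_R e_H)^. Define ê_H = R̄ᵀKR - RᵀKR̄. Then ė_H = -(tr(R̄ᵀKR)I - R̄ᵀKR)(γ̃ + k_R e_H) + ê_H Ω. -/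
open Matrix

noncomputable section

attribute [local instance] Matrix.linftyOpNormedAddCommGroup Matrix.linftyOpNormedSpace
attribute [local instance] Matrix.linftyOpNormedRing Matrix.linftyOpNormedAlgebra

lemma hat_transpose (x : Fin 3 → ℝ) : (hat x)ᵀ = -hat x := by
  ext i j
  fin_cases i <;> fin_cases j <;> simp [hat, Matrix.transpose_apply]

lemma key (A : Matrix (Fin 3) (Fin 3) ℝ) (Ω w : Fin 3 → ℝ) :
    vee (-(hat (Ω + w)) * A + A * hat Ω + hat Ω * Aᵀ - Aᵀ * hat (Ω + w))
      = -((A.trace • (1 : Matrix (Fin 3) (Fin 3) ℝ) - A).mulVec w)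
        + (hat (vee (A - Aᵀ))).mulVec Ω := by
  funext i
  fin_cases i <;>
    simp [vee, hat, Matrix.mul_apply, Matrix.mulVec, Matrix.trace, Matrix.diag,
      Fin.sum_univ_succ, dotProduct, Matrix.one_apply, Matrix.vecMul] <;> ring

def veeL : Matrix (Fin 3) (Fin 3) ℝ →ₗ[ℝ] (Fin 3 → ℝ) where
  toFun := vee
  map_add' M N := by funext i; fin_cases i <;> simp [vee]
  map_smul' c M := by funext i; fin_cases i <;> simp [vee]

def transL : Matrix (Fin 3) (Fin 3) ℝ →ₗ[ℝ] Matrix (Fin 3) (Fin 3) ℝ where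
  toFun := Matrix.transpose
  map_add' := Matrix.transpose_add
  map_smul' := Matrix.transpose_smul

theorem deriv_eH (K : Matrix (Fin 3) (Fin 3) ℝ) (hK : Kᵀ = K)
    (R Rbar : ℝ → Matrix (Fin 3) (Fin 3) ℝ) (Ω γtil : ℝ → Fin 3 → ℝ) (kR : ℝ)
    (eH : ℝ → Fin 3 → ℝ)
    (heH : ∀ t, eH t = vee ((Rbar t)ᵀ * K * R t - (R t)ᵀ * K * Rbar t))
    (hRdyn : ∀ t, HasDerivAt R (R t * hat (Ω t)) t)
    (hRbardyn : ∀ t, HasDerivAt Rbar (Rbar t * hat (Ω t + γtil t + kR • eH t)) t)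
    (hR : ∀ t, SO3 (R t)) (hRbar : ∀ t, SO3 (Rbar t)) (t : ℝ) :
    HasDerivAt eH
      (-((((Rbar t)ᵀ * K * R t).trace • (1 : Matrix (Fin 3) (Fin 3) ℝ)
            - (Rbar t)ᵀ * K * R t).mulVec (γtil t + kR • eH t))
        + (hat (eH t)).mulVec (Ω t)) t := by
  set A := (Rbar t)ᵀ * K * R t with hA
  set w := γtil t + kR • eH t with hw
  have hωbar : Ω t + γtil t + kR • eH t = Ω t + w := by rw [hw]; abel
  -- derivative of the transposes
  have hRbarT : HasDerivAt (fun s => (Rbar s)ᵀ) (Rbar t * hat (Ω t + w))ᵀ t := by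
    rw [← hωbar]
    exact (transL.toContinuousLinearMap.hasFDerivAt.comp_hasDerivAt t (hRbardyn t))
  have hRT : HasDerivAt (fun s => (R s)ᵀ) (R t * hat (Ω t))ᵀ t :=
    transL.toContinuousLinearMap.hasFDerivAt.comp_hasDerivAt t (hRdyn t)
  have h1 : HasDerivAt (fun s => (Rbar s)ᵀ * K * R s)
      ((Rbar t * hat (Ω t + w))ᵀ * K * R t + (Rbar t)ᵀ * K * (R t * hat (Ω t))) t := by
    have := (hRbarT.mul_const K).mul (hRdyn t)
    simp [mul_assoc, Pi.mul_def] at this ⊢; exact this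
  have h2 : HasDerivAt (fun s => (R s)ᵀ * K * Rbar s)
      ((R t * hat (Ω t))ᵀ * K * Rbar t + (R t)ᵀ * K * (Rbar t * hat (Ω t + w))) t := by
    have h := (hRT.mul_const K).mul (hRbardyn t)
    rw [hωbar] at h
    simp [mul_assoc, Pi.mul_def] at h ⊢; exact h
  have hM : HasDerivAt (fun s => (Rbar s)ᵀ * K * R s - (R s)ᵀ * K * Rbar s)
      (((Rbar t * hat (Ω t + w))ᵀ * K * R t + (Rbar t)ᵀ * K * (R t * hat (Ω t)))
        - ((R t * hat (Ω t))ᵀ * K * Rbar t + (R t)ᵀ * K * (Rbar t * hat (Ω t + w)))) t :=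
    h1.sub h2
  have heHfun : eH = fun s => vee ((Rbar s)ᵀ * K * R s - (R s)ᵀ * K * Rbar s) := funext heH
  have hDeq : ((Rbar t * hat (Ω t + w))ᵀ * K * R t + (Rbar t)ᵀ * K * (R t * hat (Ω t)))
        - ((R t * hat (Ω t))ᵀ * K * Rbar t + (R t)ᵀ * K * (Rbar t * hat (Ω t + w)))
      = -(hat (Ω t + w)) * A + A * hat (Ω t) + hat (Ω t) * Aᵀ - Aᵀ * hat (Ω t + w) := by
    have hAT : Aᵀ = (R t)ᵀ * K * Rbar t := by
      rw [hA]; simp [Matrix.transpose_mul, hK, Matrix.mul_assoc]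
    rw [hA, hAT]
    simp only [Matrix.transpose_mul, hat_transpose]
    noncomm_ring
  have hEnd : HasDerivAt eH
      (vee (-(hat (Ω t + w)) * A + A * hat (Ω t) + hat (Ω t) * Aᵀ - Aᵀ * hat (Ω t + w))) t := by
    rw [heHfun, ← hDeq]
    exact veeL.toContinuousLinearMap.hasFDerivAt.comp_hasDerivAt t hM
  rw [key] at hEnd
  have hAT : Aᵀ = (R t)ᵀ * K * Rbar t := by
    rw [hA]; simp [Matrix.transpose_mul, hK, Matrix.mul_assoc]
  rw [hAT, ← heH t] at hEnd
  exact hEnd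
end
end
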